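/- Every normalized Laurent polynomial Δ ∈ ℤ[t,t⁻¹] (i.e. satisfying Δ(t⁻¹) = Δ(t) and Δ(1) = 1) can be written in a unique way in the form Δ(t) = 1 + a₀·(2 − t − t⁻¹) + Σ_{i≥1} a_i·(t^i + t^{−i})·(2 − t − t⁻¹), where the a_i are integers, all but finitely many of which are zero. -/

import Mathlib

open LaurentPolynomial

/-- Evaluation of an integer Laurent polynomial at a (nonzero) complex number `z`,
substituting `t = z`. -/
noncomputable def evalz (z : ℂ) (f : LaurentPolynomial ℤ) : ℂ :=
  f.coeff.sum fun n a => (a : ℂ) * z ^ n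

/-- The building blocks: `(2 - t - t⁻¹)` for `i = 0` and `(tⁱ + t⁻ⁱ)(2 - t - t⁻¹)` for
`i ≥ 1`. -/
noncomputable def basisP (i : ℕ) : LaurentPolynomial ℤ :=
  (if i = 0 then 1 else T (i : ℤ) + T (-(i : ℤ))) * (2 - T 1 - T (-1))

/-! ### Auxiliary definitions -/

/-- The linear combination map. -/
noncomputable def Phi (a : ℕ →₀ ℤ) : LaurentPolynomial ℤ :=
  a.sum fun i c => C c * basisP i

/-- Coefficients of `tⁱ + t⁻ⁱ` (with the convention `1` at `i = 0`). -/
def sig (i : ℕ) (n : ℤ) : ℤ :=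
  (if n = (i : ℤ) then 1 else 0) + (if i ≠ 0 ∧ n = -(i : ℤ) then 1 else 0)

lemma two_eq_single : (2 : LaurentPolynomial ℤ) = AddMonoidAlgebra.single (0 : ℤ) (2 : ℤ) := by
  rw [single_eq_C]
  exact (map_ofNat C 2).symm

lemma mulK_apply (f : LaurentPolynomial ℤ) (n : ℤ) :
    ((f * (2 - T 1 - T (-1)) : LaurentPolynomial ℤ)).coeff n = 2 * f.coeff n - f.coeff (n - 1) - f.coeff (n + 1) := by
  rw [mul_sub, mul_sub, AddMonoidAlgebra.coeff_sub, AddMonoidAlgebra.coeff_sub, Finsupp.sub_apply,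
    Finsupp.sub_apply, two_eq_single]
  rw [show (T 1 : LaurentPolynomial ℤ) = AddMonoidAlgebra.single (1 : ℤ) (1 : ℤ) from rfl,
    show (T (-1) : LaurentPolynomial ℤ) = AddMonoidAlgebra.single (-1 : ℤ) (1 : ℤ) from rfl]
  rw [AddMonoidAlgebra.coeff_mul_single_apply, AddMonoidAlgebra.coeff_mul_single_apply,
    AddMonoidAlgebra.coeff_mul_single_apply]
  simp only [neg_zero, add_zero, mul_one, neg_neg, ← sub_eq_add_neg]
  ring

lemma S_apply (i : ℕ) (m : ℤ) :
    ((if i = 0 then 1 else T (i : ℤ) + T (-(i : ℤ))) : LaurentPolynomial ℤ).coeff m = sig i m := by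
  split_ifs with h
  · subst h
    rw [show (1 : LaurentPolynomial ℤ) = T 0 from rfl, T_apply]
    simp only [sig]
    split_ifs <;> omega
  · rw [AddMonoidAlgebra.coeff_add, Finsupp.add_apply, T_apply, T_apply]
    simp only [sig]
    split_ifs <;> omega

lemma basisP_apply (i : ℕ) (n : ℤ) :
    (basisP i).coeff n = 2 * sig i n - sig i (n - 1) - sig i (n + 1) := by
  rw [basisP, mulK_apply, S_apply, S_apply, S_apply]

lemma sig_neg (i : ℕ) (n : ℤ) : sig i (-n) = sig i n := by
  simp only [sig]
  split_ifs <;> omega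

lemma basisP_neg (i : ℕ) (n : ℤ) : (basisP i).coeff (-n) = (basisP i).coeff n := by
  rw [basisP_apply, basisP_apply, show -n - 1 = -(n + 1) by ring,
    show -n + 1 = -(n - 1) by ring, sig_neg, sig_neg, sig_neg]
  ring

lemma sig_vanish (i : ℕ) (m : ℤ) (h1 : m ≠ (i : ℤ)) (h2 : m ≠ -(i : ℤ)) : sig i m = 0 := by
  simp only [sig]
  split_ifs <;> omega

lemma basisP_succ_self (i : ℕ) : (basisP i).coeff ((i : ℤ) + 1) = -1 := by
  rw [basisP_apply]
  have h1 : sig i ((i : ℤ) + 1) = 0 := sig_vanish _ _ (by omega) (by omega)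
  have h2 : sig i ((i : ℤ) + 1 - 1) = 1 := by
    simp only [sig]; split_ifs <;> omega
  have h3 : sig i ((i : ℤ) + 1 + 1) = 0 := sig_vanish _ _ (by omega) (by omega)
  rw [h1, h2, h3]; ring

lemma basisP_vanish (i : ℕ) (n : ℤ) (h : i + 1 < n.natAbs) : (basisP i).coeff n = 0 := by
  rw [basisP_apply]
  rw [sig_vanish i n (by omega) (by omega), sig_vanish i (n - 1) (by omega) (by omega),
    sig_vanish i (n + 1) (by omega) (by omega)]
  ring

lemma C_mul_apply (c : ℤ) (p : LaurentPolynomial ℤ) (n : ℤ) :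
    (C c * p).coeff n = c * p.coeff n := by
  rw [← single_eq_C, AddMonoidAlgebra.coeff_single_mul_apply, neg_zero, zero_add]

lemma Phi_apply (a : ℕ →₀ ℤ) (n : ℤ) :
    (Phi a).coeff n = a.sum fun i c => c * (basisP i).coeff n := by
  rw [Phi, AddMonoidAlgebra.coeff_finsuppSum, Finsupp.sum_apply]
  exact Finsupp.sum_congr fun i _ => C_mul_apply _ _ _

lemma Phi_single (i : ℕ) (c : ℤ) : Phi (Finsupp.single i c) = C c * basisP i := by
  rw [Phi, Finsupp.sum_single_index]
  simp

lemma Phi_sub (a b : ℕ →₀ ℤ) : Phi (a - b) = Phi a - Phi b := by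
  rw [Phi, Phi, Phi, Finsupp.sum_sub_index]
  exact fun i b c => by rw [map_sub, sub_mul]

lemma Phi_injective : Function.Injective Phi := by
  intro a b h
  by_contra hne
  have hGne : a - b ≠ 0 := sub_ne_zero.mpr hne
  have hG : Phi (a - b) = 0 := by rw [Phi_sub, h, sub_self]
  set G := a - b with hGdef
  have hne' : G.support.Nonempty := Finsupp.support_nonempty_iff.mpr hGne
  set i := G.support.max' hne' with hi
  have him : i ∈ G.support := Finset.max'_mem _ _
  have hcoeff : (Phi G).coeff ((i : ℤ) + 1) = -G i := by
    rw [Phi_apply, Finsupp.sum]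
    rw [Finset.sum_eq_single i]
    · rw [basisP_succ_self]; ring
    · intro j hj hji
      have hle : j ≤ i := Finset.le_max' _ _ hj
      rw [basisP_vanish j _ (by omega), mul_zero]
    · intro hnot; exact absurd him hnot
  rw [hG] at hcoeff
  have hzero : (0 : LaurentPolynomial ℤ).coeff ((i : ℤ) + 1) = 0 := rfl
  rw [hzero] at hcoeff
  exact Finsupp.mem_support_iff.mp him (by omega)

/-- The augmentation (sum of coefficients) as a ring hom. -/
noncomputable def aug : LaurentPolynomial ℤ →+* ℤ :=
  AddMonoidAlgebra.liftNCRingHom (RingHom.id ℤ) 1 fun _ _ => Commute.all _ _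

lemma aug_single (n : ℤ) (c : ℤ) : aug (AddMonoidAlgebra.single n c) = c := by
  rw [aug, AddMonoidAlgebra.liftNCRingHom_single]
  simp

lemma aug_T (n : ℤ) : aug (T n) = 1 := aug_single n 1

lemma aug_C (c : ℤ) : aug (C c) = c := by
  rw [← single_eq_C]; exact aug_single 0 c

lemma aug_basisP (i : ℕ) : aug (basisP i) = 0 := by
  rw [basisP, map_mul]
  have : aug (2 - T 1 - T (-1)) = 0 := by
    rw [map_sub, map_sub, aug_T, aug_T, map_ofNat]
    ring
  rw [this, mul_zero]

lemma aug_apply (f : LaurentPolynomial ℤ) : aug f = f.coeff.sum fun _ c => c := by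
  induction f using AddMonoidAlgebra.induction with
  | zero => simp
  | single_add n c f hn hc ih =>
    rw [show (AddMonoidAlgebra.single n c + f : LaurentPolynomial ℤ) = AddMonoidAlgebra.single n c + f from rfl]
    rw [map_add, aug_single, ih, AddMonoidAlgebra.coeff_add, Finsupp.sum_add_index (fun _ _ => rfl) (fun _ _ _ _ => rfl),
      AddMonoidAlgebra.coeff_single, Finsupp.sum_single_index rfl]

lemma evalz_one_eq (f : LaurentPolynomial ℤ) : evalz 1 f = (aug f : ℂ) := by
  rw [evalz, aug_apply, Finsupp.sum, Finsupp.sum, Int.cast_sum]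
  exact Finset.sum_congr rfl fun n _ => by rw [one_zpow, mul_one]

lemma invert_basisP (i : ℕ) : invert (basisP i) = basisP i := by
  rw [basisP, map_mul]
  congr 1
  · split_ifs with h
    · exact map_one _
    · rw [map_add, invert_T, invert_T, neg_neg, add_comm]
  · rw [map_sub, map_sub, invert_T, invert_T, neg_neg, map_ofNat]
    ring

lemma symm_apply {f : LaurentPolynomial ℤ} (hsym : invert f = f) (n : ℤ) : f.coeff (-n) = f.coeff n := by
  conv_rhs => rw [← hsym]
  rw [invert_apply]

lemma exists_rep : ∀ (N : ℕ) (f : LaurentPolynomial ℤ), invert f = f → aug f = 0 →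
    (∀ n : ℤ, N < n.natAbs → f.coeff n = 0) → ∃ a : ℕ →₀ ℤ, f = Phi a := by
  intro N
  induction N with
  | zero =>
    intro f _ haug hsupp
    refine ⟨0, ?_⟩
    have hsingle : f = AddMonoidAlgebra.single 0 (f.coeff 0) := by
      ext n
      rcases eq_or_ne n 0 with rfl | hn
      · rw [AddMonoidAlgebra.coeff_single, Finsupp.single_eq_same]
      · rw [hsupp n (by omega), AddMonoidAlgebra.coeff_single, Finsupp.single_eq_of_ne hn]
    have h0 : f.coeff 0 = 0 := by
      rw [hsingle, aug_single] at haug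
      exact haug
    rw [h0] at hsingle
    rw [hsingle, AddMonoidAlgebra.single_zero, Phi, Finsupp.sum_zero_index]
  | succ N ih =>
    intro f hsym haug hsupp
    set c := f.coeff ((N : ℤ) + 1) with hc
    have hgap : ∀ n : ℤ, (f + C c * basisP N).coeff n = f.coeff n + c * (basisP N).coeff n := fun n => by
      rw [AddMonoidAlgebra.coeff_add, Finsupp.add_apply, C_mul_apply]
    have hsym' : invert (f + C c * basisP N) = f + C c * basisP N := by
      rw [map_add, hsym, map_mul, invert_C, invert_basisP]
    have haug' : aug (f + C c * basisP N) = 0 := by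
      rw [map_add, haug, map_mul, aug_basisP, mul_zero, add_zero]
    have hsupp' : ∀ n : ℤ, N < n.natAbs → (f + C c * basisP N).coeff n = 0 := by
      intro n hn
      rw [hgap]
      have htri : n = (N : ℤ) + 1 ∨ n = -((N : ℤ) + 1) ∨ N + 1 < n.natAbs := by omega
      rcases htri with rfl | rfl | hbig
      · rw [← hc, basisP_succ_self]; ring
      · rw [symm_apply hsym, show ((N : ℤ) + 1) = ((N : ℤ) + 1) from rfl, ← hc,
          basisP_neg, basisP_succ_self]
        ring
      · rw [hsupp n (by omega), basisP_vanish N n (by omega)]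
        ring
    obtain ⟨a, ha⟩ := ih (f + C c * basisP N) hsym' haug' hsupp'
    refine ⟨a - Finsupp.single N c, ?_⟩
    rw [Phi_sub, Phi_single, ← ha]
    ring

/-- Every normalized Laurent polynomial `Δ` (i.e. `Δ(t⁻¹) = Δ(t)` and `Δ(1) = 1`) can be
written uniquely as `1 + a₀(2 - t - t⁻¹) + ∑_{i ≥ 1} a_i (tⁱ + t⁻ⁱ)(2 - t - t⁻¹)` for
integers `a_i`, all but finitely many zero. -/
theorem normalized_unique_expansion (Δ : LaurentPolynomial ℤ)
    (hsym : invert Δ = Δ) (hone : evalz 1 Δ = 1) :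
    ∃! a : ℕ →₀ ℤ, Δ = 1 + a.sum fun i c => C c * basisP i := by
  have haug : aug Δ = 1 := by
    have h := evalz_one_eq Δ
    rw [hone] at h
    exact_mod_cast h.symm
  set f := Δ - 1 with hf
  have h1 : invert f = f := by rw [hf, map_sub, hsym, map_one]
  have h2 : aug f = 0 := by rw [hf, map_sub, haug, map_one, sub_self]
  have h3 : ∀ n : ℤ, (f.coeff.support.sup Int.natAbs) < n.natAbs → f.coeff n = 0 := by
    intro n hn
    by_contra h
    exact absurd (Finset.le_sup (f := Int.natAbs) (Finsupp.mem_support_iff.mpr h)) (by omega)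
  obtain ⟨a, ha⟩ := exists_rep _ f h1 h2 h3
  refine ⟨a, ?_, ?_⟩
  · show Δ = 1 + Phi a
    rw [← ha, hf]; ring
  · intro b hb
    apply Phi_injective
    have hb' : Δ = 1 + Phi b := hb
    have ha' : Δ = 1 + Phi a := by rw [← ha, hf]; ring
    rw [hb'] at ha'
    exact add_left_cancel ha'
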